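/- Let N be a normal subgroup of a group G and Q a finite dimensional kN-module. If Q is G-stable via some structure map α : G → GL_k(Q) satisfying α(g)ρ(n) = ρ(gng⁻¹)α(g) and α(1) = 1, then there exists a structure map α' : G → GL_k(Q) additionally satisfying α'(gn) = α'(g)ρ(n) for all g ∈ G, n ∈ N. -/

import Mathlib

/-- if a `kN`-module `Q` is `G`-stable via a structure map `α` (satisfying
`α(g)ρ(n) = ρ(gng⁻¹)α(g)` and `α(1) = 1`), then there is a structure map `α'` additionally
satisfying `α'(gn) = α'(g)ρ(n)`. -/
theorem exists_compatible_structure_map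
    {k : Type*} [Field k] {G : Type*} [Group G]
    {Q : Type*} [AddCommGroup Q] [Module k Q] [FiniteDimensional k Q]
    (N : Subgroup G) (hN : N.Normal)
    (ρ : ↥N →* (Q →ₗ[k] Q)ˣ)
    (α : G → (Q →ₗ[k] Q)ˣ)
    (hα1 : α 1 = 1)
    (hconj : ∀ (g : G) (n : ↥N),
      α g * ρ n = ρ ⟨g * ↑n * g⁻¹, hN.conj_mem ↑n n.2 g⟩ * α g) :
    ∃ α' : G → (Q →ₗ[k] Q)ˣ,
      α' 1 = 1 ∧
      (∀ (g : G) (n : ↥N),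
        α' g * ρ n = ρ ⟨g * ↑n * g⁻¹, hN.conj_mem ↑n n.2 g⟩ * α' g) ∧
      (∀ (g : G) (n : ↥N), α' (g * ↑n) = α' g * ρ n) := by
  classical
  set r : G → G := fun g => if (g : G ⧸ N) = 1 then 1 else ((g : G ⧸ N)).out with hr
  have hmk : ∀ g : G, ((r g : G) : G ⧸ N) = (g : G ⧸ N) := by
    intro g
    by_cases h : (g : G ⧸ N) = 1
    · simp only [hr]
      rw [if_pos h, h, QuotientGroup.mk_one]
    · simp only [hr]
      rw [if_neg h]
      exact Quotient.out_eq' _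
  have hmem : ∀ g : G, (r g)⁻¹ * g ∈ N := by
    intro g
    rw [← QuotientGroup.eq]
    exact hmk g
  refine ⟨fun g => α (r g) * ρ ⟨(r g)⁻¹ * g, hmem g⟩, ?_, ?_, ?_⟩
  · have h1 : r 1 = 1 := by
      simp only [hr]
      rw [if_pos (by rw [QuotientGroup.mk_one])]
    show α (r 1) * ρ ⟨(r 1)⁻¹ * 1, hmem 1⟩ = 1
    have : (⟨(r 1)⁻¹ * 1, hmem 1⟩ : N) = 1 := by
      ext
      simp [h1]
    rw [this, map_one, mul_one, h1, hα1]
  · intro g n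
    show α (r g) * ρ ⟨(r g)⁻¹ * g, hmem g⟩ * ρ n
        = ρ ⟨g * ↑n * g⁻¹, hN.conj_mem ↑n n.2 g⟩ * (α (r g) * ρ ⟨(r g)⁻¹ * g, hmem g⟩)
    set m : ↥N := ⟨(r g)⁻¹ * g, hmem g⟩ with hm
    have key := hconj (r g) (m * n * m⁻¹)
    have he : (⟨r g * ↑(m * n * m⁻¹) * (r g)⁻¹, hN.conj_mem _ (m * n * m⁻¹).2 (r g)⟩ : ↥N)
        = ⟨g * ↑n * g⁻¹, hN.conj_mem ↑n n.2 g⟩ := by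
      ext
      push_cast [hm]
      group
    rw [he] at key
    have hmn : m * n = (m * n * m⁻¹) * m := by group
    rw [mul_assoc, ← map_mul, hmn, map_mul, ← mul_assoc, key, mul_assoc]
  · intro g n
    have hq : ((g * ↑n : G) : G ⧸ N) = (g : G ⧸ N) := by
      rw [QuotientGroup.mk_mul, (QuotientGroup.eq_one_iff (↑n : G)).2 n.2, mul_one]
    have hr2 : r (g * ↑n) = r g := by simp only [hr, hq]
    show α (r (g * ↑n)) * ρ ⟨(r (g * ↑n))⁻¹ * (g * ↑n), hmem (g * ↑n)⟩
        = α (r g) * ρ ⟨(r g)⁻¹ * g, hmem g⟩ * ρ n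
    have e1 : α (r (g * ↑n)) = α (r g) := congrArg α hr2
    have e2 : ρ ⟨(r (g * ↑n))⁻¹ * (g * ↑n), hmem (g * ↑n)⟩
        = ρ (⟨(r g)⁻¹ * g, hmem g⟩ * n) := by
      congr 1
      ext
      simp [hr2, mul_assoc]
    rw [e1, e2, map_mul, mul_assoc]
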